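/- arXiv:2404.00968 — 2 statements merged into one kernel-verified Lean document; each statement's English description precedes it below -/
import Mathlib

section
/- Let Φ ∈ ℝ^{m×m} be symmetric positive definite and A: ℝ^m → ℝ^m be ε-cocoercive in the Euclidean inner product. Then Φ⁻¹∘A is ξ-cocoercive in the Φ-induced inner product ⟨x,y⟩_Φ = xᵀΦy, with ξ = ε/λ_max(Φ⁻¹); i.e., ⟨Φ⁻¹A(ω) - Φ⁻¹A(ω'), ω - ω'⟩_Φ ≥ ξ‖Φ⁻¹A(ω) - Φ⁻¹A(ω')‖²_Φ. -/
open Matrix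

lemma quad_le_sup_eigenvalues {ι : Type*} [Fintype ι] [DecidableEq ι] [Nonempty ι]
    (M : Matrix ι ι ℝ) (hM : M.IsHermitian) (u : ι → ℝ) :
    u ⬝ᵥ M *ᵥ u ≤ (Finset.univ.sup' Finset.univ_nonempty hM.eigenvalues) * (u ⬝ᵥ u) := by
  set U : Matrix ι ι ℝ := (hM.eigenvectorUnitary : Matrix ι ι ℝ) with hU
  set v : ι → ℝ := star U *ᵥ u with hv
  have hUU : U * star U = 1 := (Unitary.mem_iff.mp hM.eigenvectorUnitary.2).2
  have hT : Uᵀ = star U := by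
    ext i j; simp [star_eq_conjTranspose, conjTranspose_apply]
  have key : u ⬝ᵥ M *ᵥ u = v ⬝ᵥ (diagonal hM.eigenvalues *ᵥ v) := by
    conv_lhs => rw [hM.spectral_theorem]
    simp only [hv, ← hU, ← mulVec_mulVec, dotProduct_mulVec, ← mulVec_transpose, hT]
    simp
    exact congrArg (fun X => ((star U)ᵀ * (diagonal hM.eigenvalues * X)) *ᵥ u ⬝ᵥ u) hT
  have hTT : (star U)ᵀ = U := by rw [← hT, transpose_transpose]
  have huv : u ⬝ᵥ u = v ⬝ᵥ v := by
    rw [hv, dotProduct_mulVec, ← mulVec_transpose, hTT, mulVec_mulVec, hUU, one_mulVec]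
  rw [key, huv]
  have h1 : v ⬝ᵥ (diagonal hM.eigenvalues *ᵥ v) = ∑ i, hM.eigenvalues i * (v i * v i) := by
    simp [dotProduct, mulVec_diagonal, mul_assoc, mul_comm, mul_left_comm]
  have h2 : (Finset.univ.sup' Finset.univ_nonempty hM.eigenvalues) * (v ⬝ᵥ v)
      = ∑ i, (Finset.univ.sup' Finset.univ_nonempty hM.eigenvalues) * (v i * v i) := by
    simp [dotProduct, Finset.mul_sum]
  rw [h1, h2]
  exact Finset.sum_le_sum fun i _ =>
    mul_le_mul_of_nonneg_right (Finset.le_sup' _ (Finset.mem_univ i)) (mul_self_nonneg _)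

theorem stmt12 {ι : Type*} [Fintype ι] [DecidableEq ι] [Nonempty ι]
    (Φ : Matrix ι ι ℝ) (hΦ : Φ.PosDef) (hHinv : (Φ⁻¹).IsHermitian)
    (A : (ι → ℝ) → (ι → ℝ)) (ε : ℝ) (hε : 0 < ε)
    (hA : ∀ ω ω', ε * ((A ω - A ω') ⬝ᵥ (A ω - A ω')) ≤ (A ω - A ω') ⬝ᵥ (ω - ω')) :
    ∀ ω ω' : ι → ℝ,
      (ε / Finset.univ.sup' Finset.univ_nonempty hHinv.eigenvalues) *
        ((Φ⁻¹ *ᵥ A ω - Φ⁻¹ *ᵥ A ω') ⬝ᵥ (Φ *ᵥ (Φ⁻¹ *ᵥ A ω - Φ⁻¹ *ᵥ A ω')))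
      ≤ (Φ⁻¹ *ᵥ A ω - Φ⁻¹ *ᵥ A ω') ⬝ᵥ (Φ *ᵥ (ω - ω')) := by
  intro ω ω'
  have hinv : (Φ⁻¹).PosDef := hΦ.inv
  set lam := Finset.univ.sup' Finset.univ_nonempty hHinv.eigenvalues with hlam
  have hlampos : 0 < lam := by
    obtain ⟨i⟩ := ‹Nonempty ι›
    exact lt_of_lt_of_le (hinv.eigenvalues_pos i) (Finset.le_sup' _ (Finset.mem_univ i))
  set u : ι → ℝ := A ω - A ω' with hu
  have hΦinvΦ : Φ⁻¹ * Φ = 1 :=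
    nonsing_inv_mul Φ ((Matrix.isUnit_iff_isUnit_det Φ).mp hΦ.isUnit)
  have hTi : (Φ⁻¹)ᵀ = Φ⁻¹ := by
    have := hHinv
    rw [IsHermitian] at this
    calc (Φ⁻¹)ᵀ = (Φ⁻¹)ᴴ := by ext i j; simp [conjTranspose_apply]
    _ = Φ⁻¹ := this
  have hsym : ∀ x w : ι → ℝ, (Φ⁻¹ *ᵥ x) ⬝ᵥ (Φ *ᵥ w) = x ⬝ᵥ w := by
    intro x w
    rw [show Φ⁻¹ *ᵥ x = x ᵥ* Φ⁻¹ by rw [← mulVec_transpose, hTi],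
      ← dotProduct_mulVec, mulVec_mulVec, hΦinvΦ, one_mulVec]
  have hsub : Φ⁻¹ *ᵥ A ω - Φ⁻¹ *ᵥ A ω' = Φ⁻¹ *ᵥ u := by rw [hu, mulVec_sub]
  rw [hsub, hsym u (ω - ω'), hsym u (Φ⁻¹ *ᵥ u)]
  have hquad : u ⬝ᵥ Φ⁻¹ *ᵥ u ≤ lam * (u ⬝ᵥ u) :=
    quad_le_sup_eigenvalues (Φ⁻¹) hHinv u
  calc (ε / lam) * (u ⬝ᵥ Φ⁻¹ *ᵥ u) ≤ (ε / lam) * (lam * (u ⬝ᵥ u)) :=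
        mul_le_mul_of_nonneg_left hquad (le_of_lt (div_pos hε hlampos))
    _ = ε * (u ⬝ᵥ u) := by field_simp
    _ ≤ u ⬝ᵥ (ω - ω') := hA ω ω'
end

section
/- Let Φ be symmetric positive definite and suppose ε > 0. If for all n: τ_n⁻¹ > 1/(2ε), υ_n⁻¹ > 1/(2ε), δ_n⁻¹ > 1/(2ε), together with the Schur-complement conditions ρ⁻¹ - (1/(2ε))I ≻ L(υ⁻¹ - (1/(2ε))I)⁻¹L and η⁻¹ - (1/(2ε))I ≻ Ā(τ⁻¹ - (1/(2ε))I)⁻¹Āᵀ + L_λ(δ⁻¹ - (1/(2ε))I)⁻¹L_λ, then the block matrix Φ = [[τ⁻¹,0,0,0,-Āᵀ],[0,υ⁻¹,L,0,0],[0,L,ρ⁻¹,0,0],[0,0,0,δ⁻¹,L_λ],[-Ā,0,0,L_λ,η⁻¹]] satisfies Φ - (1/(2ε))I ≻ 0, i.e., λ_min(Φ) > 1/(2ε). -/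
open Matrix

section Aux

variable {m n : Type*} [Fintype m] [DecidableEq m] [Fintype n] [DecidableEq n]

lemma myPosDef_fromBlocks {A : Matrix m m ℝ} (B : Matrix m n ℝ) {D : Matrix n n ℝ}
    (hA : A.PosDef) (hS : (D - Bᴴ * A⁻¹ * B).PosDef) :
    (Matrix.fromBlocks A B Bᴴ D).PosDef := by
  haveI : Invertible A := hA.isUnit.invertible
  refine Matrix.PosDef.of_dotProduct_mulVec_pos ((Matrix.IsHermitian.fromBlocks₁₁ B D hA.1).2 hS.1) ?_
  intro x hx
  rw [dotProduct_mulVec, ← Sum.elim_comp_inl_inr x,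
    Matrix.schur_complement_eq₁₁ B D _ _ hA.1]
  by_cases hy : x ∘ Sum.inr = 0
  · have hxl : x ∘ Sum.inl ≠ 0 := by
      intro h
      apply hx
      funext i
      cases i with
      | inl i => exact congrFun h i
      | inr i => exact congrFun hy i
    rw [hy]
    have := hA.dotProduct_mulVec_pos hxl
    rw [dotProduct_mulVec] at this
    simpa using this
  · have h1 : 0 ≤ star (x ∘ Sum.inl + (A⁻¹ * B) *ᵥ (x ∘ Sum.inr)) ᵥ* A ⬝ᵥ
        (x ∘ Sum.inl + (A⁻¹ * B) *ᵥ (x ∘ Sum.inr)) := by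
      have := hA.posSemidef.dotProduct_mulVec_nonneg (x ∘ Sum.inl + (A⁻¹ * B) *ᵥ (x ∘ Sum.inr))
      rwa [dotProduct_mulVec] at this
    have h2 := hS.dotProduct_mulVec_pos hy
    rw [dotProduct_mulVec] at h2
    linarith

lemma myPosDef_blockDiag {A : Matrix m m ℝ} {D : Matrix n n ℝ} (hA : A.PosDef) (hD : D.PosDef) :
    (Matrix.fromBlocks A 0 0 D).PosDef := by
  have h := myPosDef_fromBlocks (A := A) (D := D) 0 hA (by simpa using hD)
  simpa using h

lemma myInv_blockDiag {A : Matrix m m ℝ} {D : Matrix n n ℝ} (hA : IsUnit A) (hD : IsUnit D) :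
    (Matrix.fromBlocks A 0 0 D)⁻¹ = Matrix.fromBlocks A⁻¹ 0 0 D⁻¹ := by
  rw [Matrix.inv_fromBlocks_zero₂₁_of_isUnit_iff A 0 D (by simp [hA, hD])]
  simp

lemma myPosDef_submatrix {M' : Matrix m m ℝ} (hM : M'.PosDef) (e : n ≃ m) :
    (M'.submatrix e e).PosDef := by
  refine Matrix.PosDef.of_dotProduct_mulVec_pos ((Matrix.isHermitian_submatrix_equiv e).2 hM.1) ?_
  intro x hx
  have hx' : x ∘ e.symm ≠ 0 := fun h => hx (by funext i; simpa using congrFun h (e i))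
  have h := hM.dotProduct_mulVec_pos hx'
  convert h using 1
  rw [Matrix.submatrix_mulVec_equiv]
  simp only [dotProduct, Function.comp_apply, Pi.star_apply]
  exact Fintype.sum_equiv e _ _ (fun i => by simp)

lemma myDiag_inv_sub_smul_one (d : m → ℝ) (hd : ∀ i, d i ≠ 0) (c : ℝ) :
    (Matrix.diagonal d)⁻¹ - c • 1 = Matrix.diagonal (fun i => (d i)⁻¹ - c) := by
  have hinv : (Matrix.diagonal d)⁻¹ = Matrix.diagonal (fun i => (d i)⁻¹) :=
    Matrix.inv_eq_right_inv (by
      rw [Matrix.diagonal_mul_diagonal]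
      have : (fun i => d i * (d i)⁻¹) = fun _ => (1 : ℝ) := by
        funext i; exact mul_inv_cancel₀ (hd i)
      rw [this, Matrix.diagonal_one])
  rw [hinv]
  ext i j
  by_cases h : i = j <;>
    simp [h, Matrix.one_apply, Matrix.diagonal_apply_ne]

end Aux

def myEquiv (N M : ℕ) :
    (Fin N ⊕ ((Fin N ⊕ Fin N) ⊕ ((Fin N × Fin M) ⊕ (Fin N × Fin M)))) ≃
    (((Fin N ⊕ (Fin N × Fin M)) ⊕ (Fin N × Fin M)) ⊕ (Fin N ⊕ Fin N)) where
  toFun i := match i with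
    | .inl a => .inl (.inl (.inl a))
    | .inr (.inl b) => .inr b
    | .inr (.inr (.inl p)) => .inl (.inl (.inr p))
    | .inr (.inr (.inr p)) => .inl (.inr p)
  invFun i := match i with
    | .inl (.inl (.inl a)) => .inl a
    | .inl (.inl (.inr p)) => .inr (.inr (.inl p))
    | .inl (.inr p) => .inr (.inr (.inr p))
    | .inr b => .inr (.inl b)
  left_inv := by rintro (a | (b | (p | p))) <;> rfl
  right_inv := by rintro (((a | p) | p) | (b | b)) <;> rfl

@[simp] lemma myEquiv_inl (N M : ℕ) (a : Fin N) :
    myEquiv N M (.inl a) = .inl (.inl (.inl a)) := rfl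
@[simp] lemma myEquiv_inr_inl (N M : ℕ) (b : Fin N ⊕ Fin N) :
    myEquiv N M (.inr (.inl b)) = .inr b := rfl
@[simp] lemma myEquiv_inr_inr_inl (N M : ℕ) (p : Fin N × Fin M) :
    myEquiv N M (.inr (.inr (.inl p))) = .inl (.inl (.inr p)) := rfl
@[simp] lemma myEquiv_inr_inr_inr (N M : ℕ) (p : Fin N × Fin M) :
    myEquiv N M (.inr (.inr (.inr p))) = .inl (.inr p) := rfl

theorem stmt16 (N M : ℕ) (hN : 0 < N) (hM : 0 < M) (ε : ℝ) (hε : 0 < ε)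
    (τ υ ρ : Fin N → ℝ) (δ η : Fin N × Fin M → ℝ)
    (hτ : ∀ n, 0 < τ n) (hυ : ∀ n, 0 < υ n) (hρ : ∀ n, 0 < ρ n)
    (hδ : ∀ i, 0 < δ i) (hη : ∀ i, 0 < η i)
    (L : Matrix (Fin N) (Fin N) ℝ) (hLsym : L.IsHermitian)
    (Abar : Matrix (Fin N × Fin M) (Fin N) ℝ)
    (Llam : Matrix (Fin N × Fin M) (Fin N × Fin M) ℝ)
    (hLlam : Llam = Matrix.kroneckerMap (· * ·) L (1 : Matrix (Fin M) (Fin M) ℝ))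
    (B : Matrix ((Fin N ⊕ Fin N) ⊕ ((Fin N × Fin M) ⊕ (Fin N × Fin M))) (Fin N) ℝ)
    (hB : B = Matrix.fromRows
      (Matrix.fromRows (0 : Matrix (Fin N) (Fin N) ℝ) (0 : Matrix (Fin N) (Fin N) ℝ))
      (Matrix.fromRows (0 : Matrix (Fin N × Fin M) (Fin N) ℝ) (-Abar)))
    (Φ : Matrix (Fin N ⊕ ((Fin N ⊕ Fin N) ⊕ ((Fin N × Fin M) ⊕ (Fin N × Fin M))))
      (Fin N ⊕ ((Fin N ⊕ Fin N) ⊕ ((Fin N × Fin M) ⊕ (Fin N × Fin M)))) ℝ)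
    (hΦ : Φ = Matrix.fromBlocks (Matrix.diagonal τ)⁻¹ Bᵀ B
      (Matrix.fromBlocks
        (Matrix.fromBlocks (Matrix.diagonal υ)⁻¹ L L (Matrix.diagonal ρ)⁻¹) 0 0
        (Matrix.fromBlocks (Matrix.diagonal δ)⁻¹ Llam Llam (Matrix.diagonal η)⁻¹)))
    (hΦpd : Φ.PosDef)
    (h1 : ∀ n, 1 / (2 * ε) < (τ n)⁻¹) (h2 : ∀ n, 1 / (2 * ε) < (υ n)⁻¹)
    (h3 : ∀ i, 1 / (2 * ε) < (δ i)⁻¹)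
    (hSchur1 : ((Matrix.diagonal ρ)⁻¹ - (1 / (2 * ε)) • 1
        - L * ((Matrix.diagonal υ)⁻¹ - (1 / (2 * ε)) • 1)⁻¹ * L).PosDef)
    (hSchur2 : ((Matrix.diagonal η)⁻¹ - (1 / (2 * ε)) • 1
        - (Abar * ((Matrix.diagonal τ)⁻¹ - (1 / (2 * ε)) • 1)⁻¹ * Abarᵀ
          + Llam * ((Matrix.diagonal δ)⁻¹ - (1 / (2 * ε)) • 1)⁻¹ * Llam)).PosDef) :
    (Φ - (1 / (2 * ε)) • 1).PosDef := by
  set c : ℝ := 1 / (2 * ε) with hc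
  -- real conjTranspose is transpose
  have hct : ∀ {a b : Type} (X : Matrix a b ℝ), Xᴴ = Xᵀ := fun X => by
    ext i j; simp [Matrix.conjTranspose_apply]
  have hLT : Lᴴ = L := hLsym.eq
  have hLlamT : Llamᴴ = Llam := by
    rw [hct, hLlam, ← Matrix.kroneckerMap_transpose, Matrix.transpose_one, ← hct, hLT]
  -- positive definiteness of the shifted diagonal blocks
  have hAτ : ((Matrix.diagonal τ)⁻¹ - c • 1).PosDef := by
    rw [myDiag_inv_sub_smul_one _ (fun i => (hτ i).ne')]
    exact Matrix.PosDef.diagonal fun i => sub_pos.2 (h1 i)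
  have hAυ : ((Matrix.diagonal υ)⁻¹ - c • 1).PosDef := by
    rw [myDiag_inv_sub_smul_one _ (fun i => (hυ i).ne')]
    exact Matrix.PosDef.diagonal fun i => sub_pos.2 (h2 i)
  have hAδ : ((Matrix.diagonal δ)⁻¹ - c • 1).PosDef := by
    rw [myDiag_inv_sub_smul_one _ (fun i => (hδ i).ne')]
    exact Matrix.PosDef.diagonal fun i => sub_pos.2 (h3 i)
  -- the (υ, ρ) block
  have hM23 : (Matrix.fromBlocks ((Matrix.diagonal υ)⁻¹ - c • 1) L L
      ((Matrix.diagonal ρ)⁻¹ - c • 1)).PosDef := by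
    have h := myPosDef_fromBlocks L hAυ (by rw [hLT]; exact hSchur1)
    rwa [hLT] at h
  -- the (τ, δ, η) block
  have hA1 : (Matrix.fromBlocks ((Matrix.diagonal τ)⁻¹ - c • 1) 0 0
      ((Matrix.diagonal δ)⁻¹ - c • 1)).PosDef := myPosDef_blockDiag hAτ hAδ
  have hB1H : (Matrix.fromRows (-Abarᵀ) Llam)ᴴ = Matrix.fromCols (-Abar) Llam := by
    rw [Matrix.conjTranspose_fromRows_eq_fromCols_conjTranspose, hLlamT, hct]
    simp
  have hSchur2' : (((Matrix.diagonal η)⁻¹ - c • 1)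
      - (Matrix.fromRows (-Abarᵀ) Llam)ᴴ *
        (Matrix.fromBlocks ((Matrix.diagonal τ)⁻¹ - c • 1) 0 0
          ((Matrix.diagonal δ)⁻¹ - c • 1))⁻¹ * (Matrix.fromRows (-Abarᵀ) Llam)).PosDef := by
    rw [hB1H, myInv_blockDiag hAτ.isUnit hAδ.isUnit, Matrix.fromCols_mul_fromBlocks,
      Matrix.fromCols_mul_fromRows]
    simpa [Matrix.neg_mul, Matrix.mul_neg, Matrix.mul_zero, Matrix.zero_mul] using hSchur2
  have hM145 : (Matrix.fromBlocks
      (Matrix.fromBlocks ((Matrix.diagonal τ)⁻¹ - c • 1) 0 0 ((Matrix.diagonal δ)⁻¹ - c • 1))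
      (Matrix.fromRows (-Abarᵀ) Llam) (Matrix.fromRows (-Abarᵀ) Llam)ᴴ
      ((Matrix.diagonal η)⁻¹ - c • 1)).PosDef :=
    myPosDef_fromBlocks _ hA1 hSchur2'
  have hG : (Matrix.fromBlocks
      (Matrix.fromBlocks
        (Matrix.fromBlocks ((Matrix.diagonal τ)⁻¹ - c • 1) 0 0 ((Matrix.diagonal δ)⁻¹ - c • 1))
        (Matrix.fromRows (-Abarᵀ) Llam) (Matrix.fromRows (-Abarᵀ) Llam)ᴴ
        ((Matrix.diagonal η)⁻¹ - c • 1)) 0 0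
      (Matrix.fromBlocks ((Matrix.diagonal υ)⁻¹ - c • 1) L L
        ((Matrix.diagonal ρ)⁻¹ - c • 1))).PosDef := myPosDef_blockDiag hM145 hM23
  have key : Φ - c • 1 = (Matrix.fromBlocks
      (Matrix.fromBlocks
        (Matrix.fromBlocks ((Matrix.diagonal τ)⁻¹ - c • 1) 0 0 ((Matrix.diagonal δ)⁻¹ - c • 1))
        (Matrix.fromRows (-Abarᵀ) Llam) (Matrix.fromRows (-Abarᵀ) Llam)ᴴ
        ((Matrix.diagonal η)⁻¹ - c • 1)) 0 0
      (Matrix.fromBlocks ((Matrix.diagonal υ)⁻¹ - c • 1) L L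
        ((Matrix.diagonal ρ)⁻¹ - c • 1))).submatrix (myEquiv N M) (myEquiv N M) := by
    subst hΦ hB
    rw [hB1H]
    ext i j
    rcases i with a | (b | b) | p | p <;> rcases j with a' | (b' | b') | p' | p' <;>
      simp [Matrix.one_apply, Matrix.fromCols_apply_inl, Matrix.fromCols_apply_inr, Matrix.fromRows_apply_inl, Matrix.fromRows_apply_inr, Prod.ext_iff]
  rw [key]
  exact myPosDef_submatrix hG (myEquiv N M)
end
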